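/- The map f : z ↦ z/2 on the complex plane C is recurrent: the segment γ(t) = (8π − 6πt)e^{2πit}, t ∈ [0,1], satisfies f(γ) ∩ γ = ∅ but f²(γ) ∩ γ ≠ ∅. -/

import Mathlib

open Complex

/-- The map `f : z ↦ z/2` on `ℂ` is "recurrent": the spiral segment
`γ(t) = (8π − 6πt) e^{2πit}`, `t ∈ [0,1]`, is free (`f(γ) ∩ γ = ∅`) but
`f²(γ) ∩ γ ≠ ∅`. -/
theorem half_map_spiral_free_but_second_iterate_meets :
    let f : ℂ → ℂ := fun z => z / 2
    let γ : ℝ → ℂ := fun t =>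
      ((8 * Real.pi - 6 * Real.pi * t : ℝ) : ℂ) * Complex.exp (2 * Real.pi * Complex.I * t)
    let Γ : Set ℂ := γ '' Set.Icc (0 : ℝ) 1
    (f '' Γ) ∩ Γ = ∅ ∧ ((f ∘ f) '' Γ) ∩ Γ ≠ ∅ := by
  intro f γ Γ
  have pipos := Real.pi_pos
  have habsE : ∀ u : ℝ, ‖Complex.exp (2 * Real.pi * Complex.I * u)‖ = 1 := by
    intro u; simp [Complex.norm_exp]
  constructor
  · rw [Set.eq_empty_iff_forall_notMem]
    rintro z ⟨⟨w, ⟨s, hs, rfl⟩, rfl⟩, t, ht, hzt⟩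
    obtain ⟨hs0, hs1⟩ := hs
    obtain ⟨ht0, ht1⟩ := ht
    simp only [f, γ] at hzt
    have hmod : 8 * Real.pi - 6 * Real.pi * t = (8 * Real.pi - 6 * Real.pi * s) / 2 := by
      have h := congrArg (‖·‖) hzt
      simp only [norm_div, norm_mul, habsE, mul_one, Complex.norm_real, Real.norm_eq_abs,
        Complex.norm_two] at h
      rw [_root_.abs_of_nonneg (by nlinarith : (0:ℝ) ≤ 8 * Real.pi - 6 * Real.pi * t),
        _root_.abs_of_nonneg (by nlinarith : (0:ℝ) ≤ 8 * Real.pi - 6 * Real.pi * s)] at h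
      exact h
    have hc : ((8 * Real.pi - 6 * Real.pi * t : ℝ) : ℂ) ≠ 0 := by
      norm_cast; nlinarith
    have hE : Complex.exp (2 * Real.pi * Complex.I * t)
        = Complex.exp (2 * Real.pi * Complex.I * s) := by
      have h2 : ((8 * Real.pi - 6 * Real.pi * t : ℝ) : ℂ)
            * Complex.exp (2 * Real.pi * Complex.I * t)
          = ((8 * Real.pi - 6 * Real.pi * t : ℝ) : ℂ)
            * Complex.exp (2 * Real.pi * Complex.I * s) := by
        rw [hzt, show ((8 * Real.pi - 6 * Real.pi * t : ℝ) : ℂ)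
            = ((8 * Real.pi - 6 * Real.pi * s : ℝ) : ℂ) / 2 by push_cast [hmod]; ring]
        ring
      exact mul_left_cancel₀ hc h2
    rw [Complex.exp_eq_exp_iff_exists_int] at hE
    obtain ⟨n, hn⟩ := hE
    have hn' : t = s + n := by
      have h2 : (t : ℂ) = s + n := by
        have hI : (2 * (Real.pi : ℂ) * Complex.I) ≠ 0 := by
          simp [Complex.I_ne_zero, Real.pi_ne_zero]
        have h3 : 2 * (Real.pi : ℂ) * Complex.I * t
            = 2 * Real.pi * Complex.I * ((s : ℂ) + n) := by rw [hn]; ring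
        exact mul_left_cancel₀ hI h3
      exact_mod_cast h2
    have h1 : (-1 : ℤ) ≤ n := by exact_mod_cast (by nlinarith : (-1:ℝ) ≤ (n:ℝ))
    have h2 : n ≤ 1 := by exact_mod_cast (by nlinarith : ((n:ℝ) ≤ 1))
    interval_cases n <;> (push_cast at hn'; nlinarith)
  · intro h
    apply Set.eq_empty_iff_forall_notMem.mp h ((8 * Real.pi : ℝ) / 4 : ℂ)
    constructor
    · refine ⟨γ 0, ⟨0, ⟨le_refl 0, zero_le_one⟩, rfl⟩, ?_⟩
      simp only [f, γ, Function.comp]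
      push_cast
      simp [Complex.exp_zero]
      ring
    · refine ⟨1, ⟨zero_le_one, le_refl 1⟩, ?_⟩
      simp only [γ]
      rw [show (2 * Real.pi * Complex.I * ((1:ℝ):ℂ)) = 2 * Real.pi * Complex.I by
        push_cast; ring, Complex.exp_two_pi_mul_I]
      push_cast
      ring
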